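/- Let jobs 1,…,n have processing times p_j ≥ 0, resource rates c_j ≥ 0, energies e_j = p_j c_j, due dates d_1 ≤ d_2 ≤ ⋯ ≤ d_n, and let the facility have capacity C > 0. Let π be a permutation of {1,…,n} ordering the jobs by nondecreasing energy, i.e., e_{π(1)} ≤ e_{π(2)} ≤ ⋯ ≤ e_{π(n)}. Then for every cumulative schedule s with s_j ≥ 0 for all j, the total tardiness satisfies Σ_{j=1}^n max(0, s_j + p_j − d_j) ≥ Σ_{k=1}^n T̂_k, where T̂_k = max(0, (1/C) Σ_{j=1}^k e_{π(j)} − d_k). -/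

import Mathlib

/-- `s` is a cumulative schedule of the job set `J` with processing times `p`,
resource consumption rates `c`, and resource capacity `C`: at every time `t`,
the total rate of resource consumption of the jobs running at `t` is at most `C`. -/
def CumulativeSchedule {ι : Type*} (J : Finset ι) (p c : ι → ℝ) (C : ℝ) (s : ι → ℝ) : Prop :=
  ∀ t : ℝ, ∑ j ∈ J.filter (fun j => s j ≤ t ∧ t < s j + p j), c j ≤ C


open MeasureTheory

-- two-point swap inequality
lemma swap2 (a b u v : ℝ) (hab : a ≤ b) (huv : u ≤ v) :
    max 0 (a - u) + max 0 (b - v) ≤ max 0 (b - u) + max 0 (a - v) := by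
  simp only [max_def]
  split_ifs <;> linarith

lemma key : ∀ (n : ℕ) (A f d : Fin n → ℝ), Monotone d →
    (∀ (k : Fin n) (T : Finset (Fin n)), (k : ℕ) + 1 ≤ T.card → ∃ j ∈ T, A k ≤ f j) →
    ∑ k, max 0 (A k - d k) ≤ ∑ j, max 0 (f j - d j) := by
  intro n
  induction n with
  | zero => intro A f d _ _; simp
  | succ n ih =>
    intro A f d hd hAf
    obtain ⟨j0, -, hj0⟩ := Finset.exists_max_image Finset.univ f ⟨0, Finset.mem_univ 0⟩
    set σ := Equiv.swap j0 (Fin.last n) with hσ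
    set g : Fin (n + 1) → ℝ := fun j => f (σ j) with hg
    -- step 1 : swapping does not increase tardiness
    have step1 : ∑ j, max 0 (g j - d j) ≤ ∑ j, max 0 (f j - d j) := by
      by_cases hj : j0 = Fin.last n
      · apply le_of_eq
        apply Finset.sum_congr rfl
        intro j _
        simp [hg, hσ, hj, Equiv.swap_self]
      · have hsub : {j0, Fin.last n} ⊆ (Finset.univ : Finset (Fin (n+1))) := by
          intro x _; exact Finset.mem_univ x
        have key2 : ∀ F : Fin (n+1) → ℝ,
            ∑ j, F j = ∑ j ∈ (Finset.univ \ {j0, Fin.last n}), F j + (F j0 + F (Fin.last n)) := by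
          intro F
          rw [← Finset.sum_pair hj, Finset.sum_sdiff hsub]
        rw [key2 (fun j => max 0 (g j - d j)), key2 (fun j => max 0 (f j - d j))]
        have hrest : ∑ j ∈ (Finset.univ \ {j0, Fin.last n}), max 0 (g j - d j)
            = ∑ j ∈ (Finset.univ \ {j0, Fin.last n}), max 0 (f j - d j) := by
          apply Finset.sum_congr rfl
          intro j hjmem
          simp only [Finset.mem_sdiff, Finset.mem_insert, Finset.mem_singleton] at hjmem
          push_neg at hjmem
          simp [hg, hσ, Equiv.swap_apply_of_ne_of_ne hjmem.2.1 hjmem.2.2]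
        rw [hrest]
        gcongr ?_ + ?_
        · exact le_refl _
        · have h1 : g j0 = f (Fin.last n) := by simp [hg, hσ]
          have h2 : g (Fin.last n) = f j0 := by simp [hg, hσ]
          rw [h1, h2]
          exact swap2 (f (Fin.last n)) (f j0) (d j0) (d (Fin.last n))
            (hj0 _ (Finset.mem_univ _)) (hd (Fin.le_last j0))
    refine le_trans ?_ step1
    -- step 2 : split off the last index
    rw [Fin.sum_univ_castSucc (f := fun k => max 0 (A k - d k)),
        Fin.sum_univ_castSucc (f := fun j => max 0 (g j - d j))]
    gcongr ?_ + ?_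
    · -- inductive hypothesis
      refine ih (fun k => A k.castSucc) (fun j => g j.castSucc) (fun k => d k.castSucc)
        (fun i j hij => hd (by simpa using hij)) ?_
      intro k T hT
      obtain ⟨j, hjmem, hjle⟩ := hAf k.castSucc
        ((T.map Fin.castSuccEmb).map σ.symm.toEmbedding) (by simpa using hT)
      simp only [Finset.mem_map, Equiv.coe_toEmbedding] at hjmem
      obtain ⟨x, hx, rfl⟩ := hjmem
      obtain ⟨y, hy, rfl⟩ := hx
      refine ⟨y, hy, ?_⟩
      simpa [hg, hσ, Equiv.symm_swap] using hjle
    · -- last term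
      obtain ⟨j, -, hjle⟩ := hAf (Fin.last n) Finset.univ (by simp)
      have : A (Fin.last n) ≤ g (Fin.last n) := by
        have h2 : g (Fin.last n) = f j0 := by simp [hg, hσ]
        rw [h2]
        exact le_trans hjle (hj0 _ (Finset.mem_univ _))
      exact max_le_max (le_refl 0) (by linarith)

lemma le_orderEmb {m n : ℕ} (E : Fin m ↪o Fin n) (i : Fin m) : (i : ℕ) ≤ (E i : ℕ) := by
  obtain ⟨i, hi⟩ := i
  induction i with
  | zero => exact Nat.zero_le _
  | succ i ihi =>
    have hlt : i < m := by omega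
    have h : (E ⟨i, hlt⟩ : ℕ) < (E ⟨i + 1, hi⟩ : ℕ) := E.strictMono (by simp [Fin.lt_def])
    have h2 := ihi hlt
    have e1 : ((⟨i, hlt⟩ : Fin m) : ℕ) = i := rfl
    have e2 : ((⟨i + 1, hi⟩ : Fin m) : ℕ) = i + 1 := rfl
    omega

lemma sum_smallest {n : ℕ} (g : Fin n → ℝ) (hg : Monotone g) (hg0 : ∀ i, 0 ≤ g i)
    (k : Fin n) (T : Finset (Fin n)) (hT : (k : ℕ) + 1 ≤ T.card) :
    ∑ i ∈ Finset.Iic k, g i ≤ ∑ i ∈ T, g i := by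
  obtain ⟨S, hST, hScard⟩ := T.exists_subset_card_eq hT
  refine le_trans ?_ (Finset.sum_le_sum_of_subset_of_nonneg hST fun i _ _ => hg0 i)
  set E := S.orderEmbOfFin hScard with hE
  have hSmap : S = Finset.univ.map E.toEmbedding := by
    ext x
    simp only [Finset.mem_map, Finset.mem_univ, true_and]
    constructor
    · intro hx
      have : x ∈ Set.range E := by rw [hE, Finset.range_orderEmbOfFin]; exact hx
      obtain ⟨i, rfl⟩ := this
      exact ⟨i, rfl⟩
    · rintro ⟨i, rfl⟩; exact Finset.orderEmbOfFin_mem S hScard i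
  have hkn : (k : ℕ) + 1 ≤ n := k.2
  have hIicmap : Finset.Iic k = Finset.univ.map (Fin.castLEEmb hkn) := by
    ext x
    simp only [Finset.mem_map, Finset.mem_univ, true_and, Finset.mem_Iic]
    constructor
    · intro hx
      exact ⟨⟨(x : ℕ), by omega⟩, by simp [Fin.ext_iff]⟩
    · rintro ⟨i, rfl⟩
      have : (i : ℕ) ≤ (k : ℕ) := by omega
      exact this
  rw [hSmap, hIicmap, Finset.sum_map, Finset.sum_map]
  apply Finset.sum_le_sum
  intro i _
  exact hg (by simpa [Fin.le_def] using le_orderEmb E i)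

lemma energy_le {n : ℕ} (p c : Fin n → ℝ) (C : ℝ) (s : Fin n → ℝ)
    (hp : ∀ j, 0 ≤ p j) (hc : ∀ j, 0 ≤ c j) (hs : ∀ j, 0 ≤ s j) (hC : 0 ≤ C)
    (hcum : CumulativeSchedule Finset.univ p c C s)
    (T : Finset (Fin n)) (M : ℝ) (hM0 : 0 ≤ M) (hM : ∀ j ∈ T, s j + p j ≤ M) :
    ∑ j ∈ T, p j * c j ≤ C * M := by
  classical
  set F : Fin n → ℝ → ℝ :=
    fun j t => Set.indicator (Set.Ico (s j) (s j + p j)) (fun _ => c j) t with hF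
  set G : ℝ → ℝ := fun t => Set.indicator (Set.Ico (0 : ℝ) M) (fun _ => C) t with hG
  have hFint : ∀ j : Fin n, Integrable (F j) := by
    intro j
    rw [hF]
    refine (integrable_indicator_iff measurableSet_Ico).2 ?_
    exact integrableOn_const measure_Ico_lt_top.ne
  have hGint : Integrable G := by
    rw [hG]
    refine (integrable_indicator_iff measurableSet_Ico).2 ?_
    exact integrableOn_const measure_Ico_lt_top.ne
  have hFval : ∀ j : Fin n, ∫ t, F j t = p j * c j := by
    intro j
    rw [hF]
    simp only
    rw [integral_indicator_const (c j) measurableSet_Ico]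
    simp only [Real.volume_Ico, add_sub_cancel_left, smul_eq_mul]
    rw [measureReal_def, Real.volume_Ico, add_sub_cancel_left, ENNReal.toReal_ofReal (hp j)]
  have hGval : ∫ t, G t = C * M := by
    rw [hG]
    simp only
    rw [integral_indicator_const C measurableSet_Ico]
    simp only [Real.volume_Ico, sub_zero, smul_eq_mul]
    rw [measureReal_def, Real.volume_Ico, sub_zero, ENNReal.toReal_ofReal hM0]
    ring
  have hpt : ∀ t : ℝ, ∑ j ∈ T, F j t ≤ G t := by
    intro t
    by_cases ht : t ∈ Set.Ico (0 : ℝ) M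
    · have hGt : G t = C := by rw [hG]; simp [Set.indicator_of_mem ht]
      rw [hGt]
      have : ∑ j ∈ T, F j t
          = ∑ j ∈ T.filter (fun j => s j ≤ t ∧ t < s j + p j), c j := by
        rw [hF, Finset.sum_indicator_eq_sum_filter]
        apply Finset.sum_congr _ (fun _ _ => rfl)
        apply Finset.filter_congr
        intro j _
        simp [Set.mem_Ico]
      rw [this]
      refine le_trans (Finset.sum_le_sum_of_subset_of_nonneg ?_ (fun j _ _ => hc j)) (hcum t)
      intro j hj
      simp only [Finset.mem_filter] at hj ⊢
      exact ⟨Finset.mem_univ j, hj.2⟩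
    · have hGt : G t = 0 := by rw [hG]; simp [Set.indicator_of_notMem ht]
      rw [hGt]
      apply Finset.sum_nonpos
      intro j hj
      rw [hF]
      simp only
      rw [Set.indicator_of_notMem]
      · simp only [Set.mem_Ico, not_and_or, not_le, not_lt]
        rcases not_and_or.1 (Set.mem_Ico.not.1 ht) with h | h
        · push_neg at h
          left; linarith [hs j]
        · push_neg at h
          right; linarith [hM j hj]
  calc ∑ j ∈ T, p j * c j = ∑ j ∈ T, ∫ t, F j t := by
        exact (Finset.sum_congr rfl fun j _ => (hFval j).symm)
    _ = ∫ t, ∑ j ∈ T, F j t := (integral_finset_sum T fun j _ => hFint j).symm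
    _ ≤ ∫ t, G t := integral_mono (integrable_finset_sum T fun j _ => hFint j) hGint hpt
    _ = C * M := hGval

/-- Lemma 4: if due dates are nondecreasing `d 0 ≤ ⋯ ≤ d (n-1)` and `π` is a
permutation ordering the jobs by nondecreasing energy `e j = p j * c j`, then the
total tardiness of any cumulative schedule with nonnegative start times is at least
`∑ k, max(0, (1/C) ∑_{j ≤ k} e (π j) - d k)`. -/
theorem stmt_4 (n : ℕ) (p c d : Fin n → ℝ) (C : ℝ)
    (hC : 0 < C)
    (hp : ∀ j, 0 ≤ p j)
    (hc : ∀ j, 0 ≤ c j)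
    (hd : Monotone d)
    (π : Equiv.Perm (Fin n))
    (hπ : Monotone (fun j => p (π j) * c (π j)))
    (s : Fin n → ℝ)
    (hs : ∀ j, 0 ≤ s j)
    (hcum : CumulativeSchedule Finset.univ p c C s) :
    ∑ k, max 0 ((1 / C) * ∑ j ∈ Finset.Iic k, p (π j) * c (π j) - d k) ≤
      ∑ j, max 0 (s j + p j - d j) := by
  refine key n (fun k => (1 / C) * ∑ j ∈ Finset.Iic k, p (π j) * c (π j))
    (fun j => s j + p j) d hd ?_
  intro k T hT
  have hTne : T.Nonempty := Finset.card_pos.1 (by omega)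
  obtain ⟨j1, hj1T, hj1⟩ := Finset.exists_max_image T (fun j => s j + p j) hTne
  refine ⟨j1, hj1T, ?_⟩
  have hM0 : (0 : ℝ) ≤ s j1 + p j1 := by
    have := hs j1; have := hp j1; linarith
  have hTmap : ∑ i ∈ T.map π.symm.toEmbedding, p (π i) * c (π i) = ∑ j ∈ T, p j * c j := by
    rw [Finset.sum_map]; simp
  have h1 : ∑ j ∈ Finset.Iic k, p (π j) * c (π j) ≤ ∑ j ∈ T, p j * c j := by
    rw [← hTmap]
    exact sum_smallest (fun j => p (π j) * c (π j)) hπ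
      (fun i => mul_nonneg (hp _) (hc _)) k _ (by simpa using hT)
  have h2 : ∑ j ∈ T, p j * c j ≤ C * (s j1 + p j1) :=
    energy_le p c C s hp hc hs hC.le hcum T _ hM0 hj1
  have h3 : ∑ j ∈ Finset.Iic k, p (π j) * c (π j) ≤ C * (s j1 + p j1) := le_trans h1 h2
  rw [one_div, inv_mul_le_iff₀ hC]
  exact h3
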